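/- Fix x ∈ C, t ∈ [0,1], and 0 ≤ u₁ ≤ u₂ ≤ t. If 1 − α_x(1−t+u₁) > (T(t)x)(u₂) + u₂ − u₁, then (T(t)x)(u₁) = x(0) + t − u₁ and (T(t)x)(u₂) = x(0) + t − u₂. -/

import Mathlib

open Set

noncomputable section

/-- `Ω = {−1} ∪ [0,∞)`. -/
def Omega : Set ℝ := {-1} ∪ Set.Ici 0

/-- Membership in the set `C`: `x` takes values in `[0,1]` on `Ω`
and is 1-Lipschitz on `[0,∞)`. -/
def memC (x : ℝ → ℝ) : Prop :=
  (∀ u ∈ Omega, x u ∈ Set.Icc (0:ℝ) 1) ∧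
  ∀ u₁ ∈ Set.Ici (0:ℝ), ∀ u₂ ∈ Set.Ici (0:ℝ), |x u₁ - x u₂| ≤ |u₁ - u₂|

/-- `α_x(r) = sup { x s : s ∈ {−1} ∪ [r,∞) }`. -/
def alphaF (x : ℝ → ℝ) (r : ℝ) : ℝ := sSup (x '' ({-1} ∪ Set.Ici r))

/-- The semigroup map `T(t)` for `t ∈ [0,1]`:
`(T(t)x)(−1) = x(−1)`, `(T(t)x)(u) = x(u−t)` for `u ≥ t`, and for `0 ≤ u ≤ t`
the three-case definition via `α_x`. -/
def T (t : ℝ) (x : ℝ → ℝ) : ℝ → ℝ := fun u =>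
  if u = -1 then x (-1)
  else if t ≤ u then x (u - t)
  else if 1 - alphaF x (1 - t + u) ≤ x 0 - t + u then x 0 - t + u
  else if x 0 + t - u ≤ 1 - alphaF x (1 - t + u) then x 0 + t - u
  else 1 - alphaF x (1 - t + u)

/-- The supremum distance over `Ω`. -/
def supDist (x y : ℝ → ℝ) : ℝ := sSup ((fun u => |x u - y u|) '' Omega)

lemma alpha_anti (x : ℝ → ℝ) (hx : memC x) {r₁ r₂ : ℝ} (h0 : 0 ≤ r₁) (h : r₁ ≤ r₂) :
    alphaF x r₂ ≤ alphaF x r₁ := by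
  apply csSup_le_csSup
  · refine ⟨1, ?_⟩
    rintro y ⟨s, hs, rfl⟩
    have : s ∈ Omega := by
      rcases hs with hs | hs
      · exact Or.inl hs
      · exact Or.inr (le_trans h0 hs)
    exact (hx.1 s this).2
  · exact ⟨x (-1), Set.mem_image_of_mem x (Or.inl rfl)⟩
  · exact Set.image_mono (Set.union_subset_union_right _ (Set.Ici_subset_Ici.2 h))

theorem stmt_4 (x : ℝ → ℝ) (hx : memC x) (t : ℝ) (ht : t ∈ Set.Icc (0:ℝ) 1)
    (u₁ u₂ : ℝ) (h0 : 0 ≤ u₁) (h12 : u₁ ≤ u₂) (h2t : u₂ ≤ t)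
    (h : 1 - alphaF x (1 - t + u₁) > T t x u₂ + u₂ - u₁) :
    T t x u₁ = x 0 + t - u₁ ∧ T t x u₂ = x 0 + t - u₂ := by
  have hu1ne : u₁ ≠ -1 := by linarith
  have hu2ne : u₂ ≠ -1 := by linarith
  have hA : alphaF x (1 - t + u₂) ≤ alphaF x (1 - t + u₁) :=
    alpha_anti x hx (by linarith [ht.2]) (by linarith)
  -- Step 1: compute T t x u₂ and derive key inequality
  have step2 : T t x u₂ = x 0 + t - u₂ := by
    by_cases h2 : t ≤ u₂
    · have : u₂ = t := le_antisymm h2t h2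
      subst this
      simp [T, hu2ne]
    · by_cases hb1 : 1 - alphaF x (1 - t + u₂) ≤ x 0 - t + u₂
      · exfalso
        have hT : T t x u₂ = x 0 - t + u₂ := by simp [T, hu2ne, h2, hb1]
        rw [hT] at h
        linarith
      · by_cases hb2 : x 0 + t - u₂ ≤ 1 - alphaF x (1 - t + u₂)
        · simp [T, hu2ne, h2, hb1, hb2]
        · exfalso
          have hT : T t x u₂ = 1 - alphaF x (1 - t + u₂) := by
            simp [T, hu2ne, h2, hb1, hb2]
          rw [hT] at h
          linarith
  have hkey : x 0 + t - u₁ < 1 - alphaF x (1 - t + u₁) := by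
    rw [step2] at h; linarith
  refine ⟨?_, step2⟩
  by_cases h1 : t ≤ u₁
  · have : u₁ = t := le_antisymm (le_trans h12 h2t) h1
    subst this
    simp [T, hu1ne]
  · have hb1 : ¬ (1 - alphaF x (1 - t + u₁) ≤ x 0 - t + u₁) := by
      push_neg
      have : u₁ ≤ t := le_of_not_ge h1
      linarith
    have hb2 : x 0 + t - u₁ ≤ 1 - alphaF x (1 - t + u₁) := le_of_lt hkey
    simp [T, hu1ne, h1, hb1, hb2]
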